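/- For every real c > 0, the function x ↦ 2·Real.arccos(Real.tanh c / Real.tanh x) + 2·Real.arcsin(Real.sinh c / Real.sinh x) is strictly decreasing on [c, ∞). -/

import Mathlib

open Real Set

/-- For every `c > 0`, the function
`x ↦ 2·arccos(tanh c / tanh x) + 2·arcsin(sinh c / sinh x)`
(the angle sum `ψ + 2θ` of an isosceles hyperbolic triangle with legs `x` and
base `2c`) is strictly decreasing on `[c, ∞)`. -/
theorem stmt_8 (c : ℝ) (hc : 0 < c) :
    StrictAntiOn
      (fun x : ℝ => 2 * Real.arccos (Real.tanh c / Real.tanh x)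
        + 2 * Real.arcsin (Real.sinh c / Real.sinh x))
      (Set.Ici c) := by
  have hsc : 0 < Real.sinh c := Real.sinh_pos_iff.2 hc
  have hcc : 0 < Real.cosh c := Real.cosh_pos c
  have hfun : (fun x : ℝ => 2 * Real.arccos (Real.tanh c / Real.tanh x)
        + 2 * Real.arcsin (Real.sinh c / Real.sinh x))
      = (fun x : ℝ => 2 * Real.arccos (Real.sinh c / Real.cosh c * Real.cosh x / Real.sinh x)
        + 2 * Real.arcsin (Real.sinh c / Real.sinh x)) := by
    funext x
    rw [Real.tanh_eq_sinh_div_cosh, Real.tanh_eq_sinh_div_cosh, div_div_eq_mul_div,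
      mul_comm (Real.sinh c / Real.cosh c) (Real.cosh x), mul_div_assoc, mul_comm]
  rw [hfun]
  apply strictAntiOn_of_deriv_neg (convex_Ici c)
  · -- continuity
    have hne : ∀ x ∈ Set.Ici c, Real.sinh x ≠ 0 := fun x hx =>
      (Real.sinh_pos_iff.2 (lt_of_lt_of_le hc hx)).ne'
    exact (continuousOn_const.mul (Real.continuous_arccos.comp_continuousOn
        ((continuousOn_const.mul Real.continuous_cosh.continuousOn).div
          Real.continuous_sinh.continuousOn hne))).add
      (continuousOn_const.mul (Real.continuous_arcsin.comp_continuousOn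
        (continuousOn_const.div Real.continuous_sinh.continuousOn hne)))
  · intro x hx
    rw [interior_Ici] at hx
    have hcx : c < x := hx
    have hx0 : 0 < x := hc.trans hcx
    have hs : 0 < Real.sinh x := Real.sinh_pos_iff.2 hx0
    have hC : 1 < Real.cosh x := Real.one_lt_cosh.2 hx0.ne'
    have hss : Real.sinh c < Real.sinh x := Real.sinh_lt_sinh.2 hcx
    -- key: sinh c * cosh x < sinh x * cosh c
    have hkey : Real.sinh c * Real.cosh x < Real.sinh x * Real.cosh c := by
      have := Real.sinh_pos_iff.2 (sub_pos.2 hcx)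
      rw [Real.sinh_sub] at this
      linarith
    set sc := Real.sinh c
    set cc := Real.cosh c
    set s := Real.sinh x
    set C := Real.cosh x
    have hC0 : 0 < C := lt_trans one_pos hC
    have ha0 : 0 < sc / cc * C / s := by positivity
    have ha1 : sc / cc * C / s < 1 := by
      rw [div_lt_one hs, div_mul_eq_mul_div, div_lt_iff₀ hcc]
      linarith
    have hb0 : 0 < sc / s := by positivity
    have hb1 : sc / s < 1 := (div_lt_one hs).2 hss
    -- derivative of inner functions
    have g1 : HasDerivAt Real.cosh s x := Real.hasDerivAt_cosh x
    have g2 : HasDerivAt Real.sinh C x := Real.hasDerivAt_sinh x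
    have ha : HasDerivAt (fun y => sc / cc * Real.cosh y / Real.sinh y)
        ((sc / cc * s * s - sc / cc * C * C) / s ^ 2) x :=
      (g1.const_mul (sc / cc)).div g2 hs.ne'
    have hb : HasDerivAt (fun y => sc / Real.sinh y) ((0 * s - sc * C) / s ^ 2) x :=
      (hasDerivAt_const x sc).div g2 hs.ne'
    have hA : HasDerivAt (fun y => Real.arccos (sc / cc * Real.cosh y / Real.sinh y))
        (-(1 / Real.sqrt (1 - (sc / cc * C / s) ^ 2)) *
          ((sc / cc * s * s - sc / cc * C * C) / s ^ 2)) x :=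
      by have h := (Real.hasDerivAt_arccos (x := sc / cc * C / s) (by linarith) ha1.ne).comp x ha; exact h
    have hB : HasDerivAt (fun y => Real.arcsin (sc / Real.sinh y))
        ((1 / Real.sqrt (1 - (sc / s) ^ 2)) * ((0 * s - sc * C) / s ^ 2)) x :=
      by have h := (Real.hasDerivAt_arcsin (x := sc / s) (by linarith) hb1.ne).comp x hb; exact h
    have hF : HasDerivAt (fun y => 2 * Real.arccos (sc / cc * Real.cosh y / Real.sinh y)
        + 2 * Real.arcsin (sc / Real.sinh y))
        (2 * (-(1 / Real.sqrt (1 - (sc / cc * C / s) ^ 2)) *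
          ((sc / cc * s * s - sc / cc * C * C) / s ^ 2))
        + 2 * ((1 / Real.sqrt (1 - (sc / s) ^ 2)) * ((0 * s - sc * C) / s ^ 2))) x :=
      (hA.const_mul 2).add (hB.const_mul 2)
    rw [hF.deriv]
    -- compute the square roots
    have hcs : cc ^ 2 = sc ^ 2 + 1 := Real.cosh_sq c
    have hcx2 : C ^ 2 = s ^ 2 + 1 := Real.cosh_sq x
    have hd0 : (0:ℝ) < s ^ 2 - sc ^ 2 := by nlinarith
    have e1 : 1 - (sc / cc * C / s) ^ 2 = (s ^ 2 - sc ^ 2) / (s * cc) ^ 2 := by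
      field_simp
      linear_combination s^2 * hcs - sc^2 * hcx2
    have e2 : 1 - (sc / s) ^ 2 = (s ^ 2 - sc ^ 2) / s ^ 2 := by
      field_simp
    have s1 : Real.sqrt (1 - (sc / cc * C / s) ^ 2)
        = Real.sqrt (s ^ 2 - sc ^ 2) / (s * cc) := by
      rw [e1, Real.sqrt_div hd0.le, Real.sqrt_sq (by positivity)]
    have s2 : Real.sqrt (1 - (sc / s) ^ 2) = Real.sqrt (s ^ 2 - sc ^ 2) / s := by
      rw [e2, Real.sqrt_div hd0.le, Real.sqrt_sq hs.le]
    rw [s1, s2]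
    have hdpos : 0 < Real.sqrt (s ^ 2 - sc ^ 2) := Real.sqrt_pos.2 hd0
    have hsq : Real.sqrt (s ^ 2 - sc ^ 2) ^ 2 = s ^ 2 - sc ^ 2 := Real.sq_sqrt hd0.le
    set d := Real.sqrt (s ^ 2 - sc ^ 2)
    have hval : 2 * (-(1 / (d / (s * cc))) * ((sc / cc * s * s - sc / cc * C * C) / s ^ 2))
        + 2 * (1 / (d / s) * ((0 * s - sc * C) / s ^ 2))
        = 2 * sc * (1 - C) / (s * d) := by
      field_simp
      linear_combination sc * hcx2
    rw [hval]
    apply div_neg_of_neg_of_pos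
    · nlinarith
    · positivity
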